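/- Let β(b) = (b·c·n - τ)·(ln 2)/√(b·v·n) for b > 0 with positive constants c, n, v, τ. Then the second derivative of β with respect to b equals -ln(2)·(b·c·n + 3τ)/(4·b²·√(b·v·n)), which is strictly negative for all b > 0; hence β is strictly concave on (0, ∞). -/

import Mathlib

lemma aux_d1 (c n v τ : ℝ) (hc : 0 < c) (hn : 0 < n) (hv : 0 < v) (hτ : 0 < τ)
    (b : ℝ) (hb : 0 < b) :
    HasDerivAt (fun x : ℝ => (x * c * n - τ) * Real.log 2 / Real.sqrt (x * v * n))
      (Real.log 2 * (b * c * n + τ) / (2 * b * Real.sqrt (b * v * n))) b := by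
  have hbvn : 0 < b * v * n := by positivity
  have hs : 0 < Real.sqrt (b * v * n) := Real.sqrt_pos.mpr hbvn
  have hsd : HasDerivAt (fun x : ℝ => Real.sqrt (x * v * n))
      (1 / (2 * Real.sqrt (b * v * n)) * (v * n)) b := by
    have h1 : HasDerivAt (fun x : ℝ => x * v * n) (v * n) b := by
      simpa using ((hasDerivAt_id b).mul_const v).mul_const n
    exact (Real.hasDerivAt_sqrt hbvn.ne').comp b h1
  have hud : HasDerivAt (fun x : ℝ => (x * c * n - τ) * Real.log 2)
      (c * n * Real.log 2) b := by
    simpa using ((((hasDerivAt_id b).mul_const c).mul_const n).sub_const τ).mul_const (Real.log 2)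
  have h := hud.div hsd hs.ne'
  refine h.congr_deriv ?_
  symm
  have hsq : Real.sqrt (b * v * n) ^ 2 = b * v * n := Real.sq_sqrt hbvn.le
  set s := Real.sqrt (b * v * n) with hsdef
  field_simp
  ring_nf
  linear_combination (τ - b*c*n) * hsq

lemma aux_d2 (c n v τ : ℝ) (hc : 0 < c) (hn : 0 < n) (hv : 0 < v) (hτ : 0 < τ)
    (b : ℝ) (hb : 0 < b) :
    HasDerivAt (fun x : ℝ => Real.log 2 * (x * c * n + τ) / (2 * x * Real.sqrt (x * v * n)))
      (-(Real.log 2) * (b * c * n + 3 * τ) / (4 * b ^ 2 * Real.sqrt (b * v * n))) b := by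
  have hbvn : 0 < b * v * n := by positivity
  have hs : 0 < Real.sqrt (b * v * n) := Real.sqrt_pos.mpr hbvn
  have hsd : HasDerivAt (fun x : ℝ => Real.sqrt (x * v * n))
      (1 / (2 * Real.sqrt (b * v * n)) * (v * n)) b := by
    have h1 : HasDerivAt (fun x : ℝ => x * v * n) (v * n) b := by
      simpa using ((hasDerivAt_id b).mul_const v).mul_const n
    exact (Real.hasDerivAt_sqrt hbvn.ne').comp b h1
  have hud : HasDerivAt (fun x : ℝ => Real.log 2 * (x * c * n + τ))
      (Real.log 2 * (c * n)) b := by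
    have : HasDerivAt (fun x : ℝ => x * c * n + τ) (c * n) b := by
      simpa using (((hasDerivAt_id b).mul_const c).mul_const n).add_const τ
    simpa using this.const_mul (Real.log 2)
  have hdd : HasDerivAt (fun x : ℝ => 2 * x * Real.sqrt (x * v * n))
      (2 * Real.sqrt (b * v * n) + 2 * b * (1 / (2 * Real.sqrt (b * v * n)) * (v * n))) b := by
    have h2 : HasDerivAt (fun x : ℝ => 2 * x) 2 b := by
      simpa using (hasDerivAt_id b).const_mul (2:ℝ)
    exact h2.mul hsd
  have hd0 : 2 * b * Real.sqrt (b * v * n) ≠ 0 := by positivity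
  have h := hud.div hdd hd0
  refine h.congr_deriv ?_
  symm
  have hsq : Real.sqrt (b * v * n) ^ 2 = b * v * n := Real.sq_sqrt hbvn.le
  set s := Real.sqrt (b * v * n) with hsdef
  field_simp
  ring_nf
  linear_combination (-4*b*c*n - 4*τ) * hsq

theorem stmt_7 (c n v τ : ℝ) (hc : 0 < c) (hn : 0 < n) (hv : 0 < v) (hτ : 0 < τ) :
    (∀ b : ℝ, 0 < b →
      deriv (deriv (fun x : ℝ => (x * c * n - τ) * Real.log 2 / Real.sqrt (x * v * n))) b
        = -(Real.log 2) * (b * c * n + 3 * τ) / (4 * b ^ 2 * Real.sqrt (b * v * n)) ∧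
      deriv (deriv (fun x : ℝ => (x * c * n - τ) * Real.log 2 / Real.sqrt (x * v * n))) b
        < 0) ∧
    StrictConcaveOn ℝ (Set.Ioi (0 : ℝ))
      (fun x : ℝ => (x * c * n - τ) * Real.log 2 / Real.sqrt (x * v * n)) := by
  set f := fun x : ℝ => (x * c * n - τ) * Real.log 2 / Real.sqrt (x * v * n) with hf
  set g := fun x : ℝ => Real.log 2 * (x * c * n + τ) / (2 * x * Real.sqrt (x * v * n)) with hg
  have key : ∀ b : ℝ, 0 < b →
      deriv (deriv f) b
        = -(Real.log 2) * (b * c * n + 3 * τ) / (4 * b ^ 2 * Real.sqrt (b * v * n)) := by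
    intro b hb
    have hev : deriv f =ᶠ[nhds b] g := by
      filter_upwards [isOpen_Ioi.mem_nhds (show b ∈ Set.Ioi (0:ℝ) from hb)] with x hx
      exact (aux_d1 c n v τ hc hn hv hτ x hx).deriv
    rw [hev.deriv_eq]
    exact (aux_d2 c n v τ hc hn hv hτ b hb).deriv
  have keyneg : ∀ b : ℝ, 0 < b →
      -(Real.log 2) * (b * c * n + 3 * τ) / (4 * b ^ 2 * Real.sqrt (b * v * n)) < 0 := by
    intro b hb
    have hs : 0 < Real.sqrt (b * v * n) := Real.sqrt_pos.mpr (by positivity)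
    have hl2 : 0 < Real.log 2 := Real.log_pos (by norm_num)
    apply div_neg_of_neg_of_pos
    · nlinarith [mul_pos hl2 (show (0:ℝ) < b*c*n+3*τ by positivity)]
    · positivity
  refine ⟨fun b hb => ⟨key b hb, (key b hb) ▸ keyneg b hb⟩, ?_⟩
  exact strictConcaveOn_of_deriv2_neg (convex_Ioi 0)
    (fun x hx => (aux_d1 c n v τ hc hn hv hτ x hx).continuousAt.continuousWithinAt)
    (by
      intro x hx
      rw [interior_Ioi] at hx
      show deriv (deriv f) x < 0
      rw [key x hx]; exact keyneg x hx)
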